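/- arXiv:2605.05613 — 5 statements merged into one kernel-verified Lean document; each statement's English description precedes it below -/
import Mathlib

section
/- Let p be a prime, m and k positive integers, q = p^m, and d = gcd(m,k). For any a, b in F_q with a ≠ 0 and b ≠ 0, the polynomial f(x) = x^{p^k+1} + a x + b has exactly 0, 1, 2, or p^d + 1 roots in F_q. -/
private lemma gcd_pow_sub_one' (b : ℕ) (hb : 2 ≤ b) (k m : ℕ) :
    Nat.gcd (b ^ k - 1) (b ^ m - 1) = b ^ Nat.gcd k m - 1 := by
  induction k using Nat.strong_induction_on generalizing m with
  | _ k ih =>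
    rcases Nat.eq_zero_or_pos k with rfl | hk
    · simp
    have hbk1 : 1 ≤ b ^ k := Nat.one_le_pow _ _ (by omega)
    have hmod : (b ^ m - 1) % (b ^ k - 1) = b ^ (m % k) - 1 := by
      have h1 : b ^ m ≡ b ^ (m % k) [MOD b ^ k - 1] := by
        conv_lhs => rw [← Nat.div_add_mod m k]
        rw [pow_add, pow_mul]
        have : b ^ k ≡ 1 [MOD b ^ k - 1] :=
          ((Nat.modEq_iff_dvd' hbk1).mpr dvd_rfl).symm
        exact (((this.pow _).mul_right _).trans (by rw [one_pow, one_mul]))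
      have h2 : b ^ m - 1 ≡ b ^ (m % k) - 1 [MOD b ^ k - 1] := by
        have ha : 1 ≤ b ^ m := Nat.one_le_pow _ _ (by omega)
        have hc : 1 ≤ b ^ (m % k) := Nat.one_le_pow _ _ (by omega)
        have : (b ^ m - 1) + 1 ≡ (b ^ (m % k) - 1) + 1 [MOD b ^ k - 1] := by
          rwa [Nat.sub_add_cancel ha, Nat.sub_add_cancel hc]
        exact Nat.ModEq.add_right_cancel' 1 this
      have hlt : b ^ (m % k) - 1 < b ^ k - 1 := by
        have h3 : b ^ (m % k) < b ^ k := Nat.pow_lt_pow_right (by omega) (Nat.mod_lt m hk)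
        have h4 : 1 ≤ b ^ (m % k) := Nat.one_le_pow _ _ (by omega)
        omega
      rw [h2, Nat.mod_eq_of_lt hlt]
    rw [Nat.gcd_rec (b ^ k - 1), hmod, Nat.gcd_rec k m]
    exact ih _ (Nat.mod_lt m hk) k

private lemma ncard_pow_eq_one' (F : Type*) [Field F] [Fintype F] [DecidableEq F]
    {n : ℕ} (hn : 0 < n) :
    Set.ncard {x : F | x ^ n = 1} = Nat.gcd n (Fintype.card F - 1) := by
  set g := Nat.gcd n (Fintype.card F - 1) with hg
  have hcardu : Fintype.card Fˣ = Fintype.card F - 1 := Fintype.card_units F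
  have hg0 : 0 < g := Nat.gcd_pos_of_pos_left _ hn
  have hgdvd : g ∣ Fintype.card Fˣ := by rw [hcardu]; exact Nat.gcd_dvd_right _ _
  have key : ∀ x : F, x ^ n = 1 ↔ x ^ g = 1 := by
    intro x
    by_cases hx0 : x = 0
    · subst hx0
      rw [zero_pow hn.ne', zero_pow hg0.ne']
    · set u : Fˣ := Units.mk0 x hx0 with hu
      have hcoe : ∀ j : ℕ, x ^ j = 1 ↔ u ^ j = 1 := by
        intro j
        rw [← Units.val_eq_one, Units.val_pow_eq_pow_val, hu, Units.val_mk0]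
      rw [hcoe n, hcoe g, hg, ← hcardu]
      rw [pow_gcd_eq_one, and_iff_left pow_card_eq_one]
  have hset : {x : F | x ^ n = 1} = ↑(Polynomial.nthRootsFinset g (1 : F)) := by
    ext x
    rw [Set.mem_setOf_eq, Finset.mem_coe, Polynomial.mem_nthRootsFinset hg0]
    exact key x
  rw [hset, Set.ncard_coe_finset]
  obtain ⟨ζ, hζ⟩ := IsCyclic.exists_generator (α := Fˣ)
  have h1 : orderOf ζ = Fintype.card Fˣ := (orderOf_eq_card_of_forall_mem_zpowers hζ).trans Nat.card_eq_fintype_card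
  have hprim : IsPrimitiveRoot (ζ : F) (Fintype.card Fˣ) :=
    IsPrimitiveRoot.coe_units_iff.mpr (h1 ▸ IsPrimitiveRoot.orderOf ζ)
  have hfac : Fintype.card Fˣ = (Fintype.card Fˣ / g) * g := (Nat.div_mul_cancel hgdvd).symm
  have hprim2 : IsPrimitiveRoot ((ζ : F) ^ (Fintype.card Fˣ / g)) g :=
    hprim.pow Fintype.card_pos hfac
  exact hprim2.card_nthRootsFinset

theorem stmt_0 (p m k : ℕ) (hp : p.Prime) (hm : 0 < m) (hk : 0 < k)
    (F : Type*) [Field F] [Fintype F] (hF : Fintype.card F = p ^ m)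
    (a b : F) (ha : a ≠ 0) (hb : b ≠ 0) :
    Set.ncard {x : F | x ^ (p ^ k + 1) + a * x + b = 0} ∈
      ({0, 1, 2, p ^ Nat.gcd m k + 1} : Set ℕ) := by
  classical
  haveI hpf : Fact p.Prime := ⟨hp⟩
  haveI hchar : CharP F p := by
    obtain ⟨r, hr⟩ := CharP.exists F
    haveI := hr
    obtain ⟨n, hrp, hcard⟩ := FiniteField.card F r
    have hpr : p = r := by
      have hdvd : p ∣ r ^ (n : ℕ) := by
        rw [← hcard, hF]; exact dvd_pow_self p hm.ne'
      exact (Nat.prime_dvd_prime_iff_eq hp hrp).mp (hp.dvd_of_dvd_pow hdvd)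
    rwa [hpr]
  set Q : ℕ := p ^ k with hQdef
  have hQ2 : 2 ≤ Q := Nat.one_lt_pow hk.ne' hp.one_lt
  have hQ1 : Q - 1 + 1 = Q := by omega
  have hfrob : ∀ x y : F, (x + y) ^ Q = x ^ Q + y ^ Q := fun x y =>
    add_pow_char_pow (R := F) (p := p) (n := k) (x := x) (y := y)
  set R : Set F := {x : F | x ^ (Q + 1) + a * x + b = 0} with hRdef
  by_cases hR : R = ∅
  · left; rw [hR]; simp
  obtain ⟨x0, hx0⟩ := Set.nonempty_iff_ne_empty.mpr hR
  have hx0' : x0 ^ (Q + 1) + a * x0 + b = 0 := hx0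
  have hx00 : x0 ≠ 0 := by
    rintro rfl
    rw [zero_pow (by omega), mul_zero, zero_add, zero_add] at hx0'
    exact hb hx0'
  set c : F := x0 ^ Q + a with hcdef
  have hc : c ≠ 0 := by
    intro h
    apply hb
    have : c * x0 + b = 0 := by
      rw [hcdef]; linear_combination hx0'
    rw [h, zero_mul, zero_add] at this
    exact this
  -- key correspondence
  set S : Set F := {w : F | c * w ^ Q + x0 * w + 1 = 0} with hSdef
  have h0S : (0 : F) ∉ S := by
    intro h
    have : c * (0:F) ^ Q + x0 * 0 + 1 = 0 := h
    rw [zero_pow (by omega), mul_zero, mul_zero, zero_add, zero_add] at this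
    exact one_ne_zero this
  have hkey : ∀ w : F, w ≠ 0 → ((x0 + w⁻¹) ∈ R ↔ w ∈ S) := by
    intro w hw
    have htw : w⁻¹ * w = 1 := inv_mul_cancel₀ hw
    have htwQ : (w⁻¹) ^ Q * w ^ Q = 1 := by rw [← mul_pow, htw, one_pow]
    have expand : (x0 + w⁻¹) ^ (Q + 1) + a * (x0 + w⁻¹) + b
        = (w⁻¹) ^ (Q + 1) * (c * w ^ Q + x0 * w + 1) := by
      have h1 : (x0 + w⁻¹) ^ (Q + 1) = (x0 ^ Q + (w⁻¹) ^ Q) * (x0 + w⁻¹) := by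
        rw [pow_succ, hfrob x0 w⁻¹]
      rw [h1, hcdef]
      linear_combination hx0' - ((x0 ^ Q + a) * w⁻¹) * htwQ - (x0 * (w⁻¹) ^ Q) * htw
    constructor
    · intro hmem
      have : (w⁻¹) ^ (Q + 1) * (c * w ^ Q + x0 * w + 1) = 0 := by
        rw [← expand]; exact hmem
      rcases mul_eq_zero.mp this with h | h
      · exact absurd h (pow_ne_zero _ (inv_ne_zero hw))
      · exact h
    · intro hmem
      show (x0 + w⁻¹) ^ (Q + 1) + a * (x0 + w⁻¹) + b = 0
      rw [expand, hSdef] at *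
      rw [hmem, mul_zero]
  have hRS : R = insert x0 ((fun w => x0 + w⁻¹) '' S) := by
    ext x
    constructor
    · intro hx
      by_cases hxx : x = x0
      · exact hxx ▸ Set.mem_insert _ _
      · right
        have hsub : x - x0 ≠ 0 := sub_ne_zero.mpr hxx
        have hw : (x - x0)⁻¹ ≠ 0 := inv_ne_zero hsub
        have heq : x0 + ((x - x0)⁻¹)⁻¹ = x := by rw [inv_inv]; ring
        refine ⟨(x - x0)⁻¹, ?_, heq⟩
        exact (hkey _ hw).mp (by rwa [heq])
    · rintro (rfl | ⟨w, hwS, rfl⟩)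
      · exact hx0
      · exact (hkey w (fun h => h0S (h ▸ hwS))).mpr hwS
  have hinj : Function.Injective (fun w : F => x0 + w⁻¹) := by
    intro u v h
    exact inv_injective (by simpa using h)
  have hnotmem : x0 ∉ (fun w : F => x0 + w⁻¹) '' S := by
    rintro ⟨w, hwS, hw⟩
    have hw0 : w⁻¹ = 0 := by
      have h' : x0 + w⁻¹ = x0 := hw
      linear_combination h'
    exact h0S ((inv_eq_zero.mp hw0) ▸ hwS)
  have hcardR : R.ncard = S.ncard + 1 := by
    rw [hRS, Set.ncard_insert_of_notMem hnotmem (Set.toFinite _),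
      Set.ncard_image_of_injective _ hinj]
  by_cases hSe : S = ∅
  · right; left
    rw [hcardR, hSe, Set.ncard_empty]
  obtain ⟨w0, hw0⟩ := Set.nonempty_iff_ne_empty.mpr hSe
  have hw0' : c * w0 ^ Q + x0 * w0 + 1 = 0 := hw0
  set K : Set F := {u : F | c * u ^ Q + x0 * u = 0} with hKdef
  have hSK : S = (fun u => w0 + u) '' K := by
    ext w
    constructor
    · intro hwS
      refine ⟨w - w0, ?_, by ring⟩
      have hwS' : c * w ^ Q + x0 * w + 1 = 0 := hwS
      show c * (w - w0) ^ Q + x0 * (w - w0) = 0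
      have hfr : (w - w0 + w0) ^ Q = (w - w0) ^ Q + w0 ^ Q := hfrob _ _
      rw [sub_add_cancel] at hfr
      linear_combination hwS' - hw0' - c * hfr
    · rintro ⟨u, huK, rfl⟩
      have huK' : c * u ^ Q + x0 * u = 0 := huK
      show c * (w0 + u) ^ Q + x0 * (w0 + u) + 1 = 0
      rw [hfrob w0 u]
      linear_combination hw0' + huK'
  have hcardS : S.ncard = K.ncard := by
    rw [hSK, Set.ncard_image_of_injective _ (add_right_injective w0)]
  set e : F := -x0 * c⁻¹ with hedef
  have he : e ≠ 0 := by
    rw [hedef]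
    exact mul_ne_zero (neg_ne_zero.mpr hx00) (inv_ne_zero hc)
  have hce : c * e = -x0 := by
    rw [hedef, mul_comm c, mul_assoc, inv_mul_cancel₀ hc, mul_one]
  set T : Set F := {u : F | u ^ (Q - 1) = e} with hTdef
  have h0T : (0 : F) ∉ T := by
    intro h
    have : (0:F) ^ (Q - 1) = e := h
    rw [zero_pow (by omega)] at this
    exact he this.symm
  have hKT : K = insert 0 T := by
    ext u
    constructor
    · intro huK
      have huK' : c * u ^ Q + x0 * u = 0 := huK
      by_cases hu : u = 0
      · exact hu ▸ Set.mem_insert _ _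
      · right
        show u ^ (Q - 1) = e
        have hQs : u ^ Q = u ^ (Q - 1) * u := by rw [← pow_succ, hQ1]
        rw [hQs] at huK'
        have h2 : u * (c * u ^ (Q - 1) + x0) = 0 := by linear_combination huK'
        rcases mul_eq_zero.mp h2 with h | h
        · exact absurd h hu
        · have : c * u ^ (Q - 1) = -x0 := by linear_combination h
          rw [hedef, eq_mul_inv_iff_mul_eq₀ hc, mul_comm]
          linear_combination this
    · rintro (rfl | huT)
      · show c * (0:F) ^ Q + x0 * 0 = 0
        rw [zero_pow (by omega)]; ring
      · have huT' : u ^ (Q - 1) = e := huT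
        show c * u ^ Q + x0 * u = 0
        have hQs : u ^ Q = u ^ (Q - 1) * u := by rw [← pow_succ, hQ1]
        rw [hQs, huT']
        linear_combination u * hce
  have hcardK : K.ncard = T.ncard + 1 := by
    rw [hKT, Set.ncard_insert_of_notMem h0T (Set.toFinite _)]
  by_cases hTe : T = ∅
  · right; right; left
    rw [hcardR, hcardS, hcardK, hTe, Set.ncard_empty]
  obtain ⟨t0, ht0⟩ := Set.nonempty_iff_ne_empty.mpr hTe
  have ht0' : t0 ^ (Q - 1) = e := ht0
  have ht00 : t0 ≠ 0 := fun h => h0T (h ▸ ht0)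
  set U : Set F := {u : F | u ^ (Q - 1) = 1} with hUdef
  have hTU : T = (fun u => t0 * u) '' U := by
    ext w
    constructor
    · intro hwT
      have hwT' : w ^ (Q - 1) = e := hwT
      refine ⟨t0⁻¹ * w, ?_, by field_simp⟩
      show (t0⁻¹ * w) ^ (Q - 1) = 1
      rw [mul_pow, inv_pow, ht0', hwT']
      exact inv_mul_cancel₀ he
    · rintro ⟨u, huU, rfl⟩
      have huU' : u ^ (Q - 1) = 1 := huU
      show (t0 * u) ^ (Q - 1) = e
      rw [mul_pow, ht0', huU', mul_one]
  have hcardT : T.ncard = U.ncard :=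
    hTU ▸ Set.ncard_image_of_injective _ (mul_right_injective₀ ht00)
  have hcardU : U.ncard = Nat.gcd (Q - 1) (Fintype.card F - 1) :=
    ncard_pow_eq_one' F (by omega)
  have hgcd : Nat.gcd (Q - 1) (Fintype.card F - 1) = p ^ Nat.gcd m k - 1 := by
    rw [hF, hQdef, gcd_pow_sub_one' p hp.two_le k m, Nat.gcd_comm k m]
  have hpd : 1 ≤ p ^ Nat.gcd m k := Nat.one_le_pow _ _ hp.pos
  right; right; right
  rw [hcardR, hcardS, hcardK, hcardT, hcardU, hgcd]
  simp only [Set.mem_singleton_iff]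
  omega
end

section
/- Let p be a prime, m, k positive integers, q = p^m, and U_{q+1} = {x in F_{q^2} : x^{q+1} = 1}. For any a, b in F_{q^2} with (a,b) ≠ (0,0), the number of solutions x in U_{q+1} of b x^{p^k+1} + a x^{p^k} + a^q x + b^q = 0 is 0, 1, 2, or p^{gcd(k,m)} + 1. -/
lemma frob_iter {F : Type*} [Monoid F] (p d : ℕ) (s : F) (h : s ^ p ^ d = s) :
    ∀ j : ℕ, s ^ p ^ (d * j) = s := by
  intro j
  induction j with
  | zero => simp
  | succ j ih => rw [Nat.mul_succ, pow_add, pow_mul, ih, h]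

lemma frob_inj {F : Type*} [Field F] (p : ℕ) [Fact p.Prime] [CharP F p] (n : ℕ) {x y : F}
    (h : x ^ p ^ n = y ^ p ^ n) : x = y := by
  have h2 : (x - y) ^ p ^ n = 0 := by rw [sub_pow_char_pow, h, sub_self]
  have := pow_eq_zero_iff (pow_ne_zero n (Fact.out : p.Prime).ne_zero) |>.mp h2
  exact sub_eq_zero.mp this

lemma gcd_fix {F : Type*} [Field F] (p : ℕ) [Fact p.Prime] [CharP F p] (s : F) :
    ∀ k m : ℕ, s ^ p ^ k = s → s ^ p ^ m = s → s ^ p ^ Nat.gcd k m = s := by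
  intro k m
  induction k, m using Nat.gcd.induction with
  | H0 n => intro _ h2; simpa using h2
  | H1 k n hk ih =>
    intro h1 h2
    rw [Nat.gcd_rec]
    apply ih ?_ h1
    apply frob_inj p (k * (n / k))
    have h3 : (s ^ p ^ (n % k)) ^ p ^ (k * (n / k)) = s := by
      rw [← pow_mul, ← pow_add, Nat.mod_add_div, h2]
    rw [h3, frob_iter p k s h1 (n / k)]

theorem stmt_2 (p m k : ℕ) (hp : p.Prime) (hm : 0 < m) (hk : 0 < k)
    (q : ℕ) (hq : q = p ^ m)
    (F : Type*) [Field F] [Fintype F] (hF : Fintype.card F = q ^ 2)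
    (a b : F) (hab : (a, b) ≠ (0, 0)) :
    Set.ncard {x : F | x ^ (q + 1) = 1 ∧
        b * x ^ (p ^ k + 1) + a * x ^ (p ^ k) + a ^ q * x + b ^ q = 0} ∈
      ({0, 1, 2, p ^ Nat.gcd k m + 1} : Set ℕ) := by
  subst hq
  classical
  haveI hfp : Fact p.Prime := ⟨hp⟩
  -- characteristic
  haveI hcr : CharP F (ringChar F) := ringChar.charP F
  obtain ⟨n, hrp, hcard⟩ := FiniteField.card F (ringChar F)
  have hpr : p = ringChar F := by
    have h1 : p ∣ (ringChar F) ^ (n : ℕ) := by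
      rw [← hcard, hF]
      exact dvd_trans (dvd_pow_self p hm.ne') (dvd_pow_self _ two_ne_zero)
    exact (Nat.prime_dvd_prime_iff_eq hp hrp).mp (hp.dvd_of_dvd_pow h1)
  haveI hchar : CharP F p := hpr ▸ hcr
  set S := {x : F | x ^ (p ^ m + 1) = 1 ∧
      b * x ^ (p ^ k + 1) + a * x ^ (p ^ k) + a ^ (p ^ m) * x + b ^ (p ^ m) = 0} with hSdef
  have hd0 : 0 < Nat.gcd k m := Nat.gcd_pos_of_pos_left m hk
  have hpd2 : 2 ≤ p ^ Nat.gcd k m := by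
    calc 2 ≤ p := hp.two_le
    _ = p ^ 1 := (pow_one p).symm
    _ ≤ p ^ Nat.gcd k m := Nat.pow_le_pow_right hp.pos hd0
  have hUne : ∀ x : F, x ^ (p ^ m + 1) = 1 → x ≠ 0 := by
    intro x h hx
    rw [hx, zero_pow (by positivity)] at h
    exact zero_ne_one h
  have hUq : ∀ x : F, x ^ (p ^ m + 1) = 1 → x ^ (p ^ m) * x = 1 := by
    intro x h; rw [← pow_succ]; exact h
  have hnegq : (-1 : F) ^ (p ^ m) = -1 := neg_one_pow_char_pow F p m
  have hQ : ∀ x : F, (x ^ (p ^ m)) ^ (p ^ m) = x := by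
    intro x
    have hcard2 : Fintype.card F = p ^ m * p ^ m := by rw [hF]; ring
    have h := FiniteField.pow_card x
    rwa [hcard2, pow_mul] at h
  by_cases hdet : a ^ (p ^ m) * a = b ^ (p ^ m) * b
  · -- degenerate case: at most 2 solutions
    have hb : b ≠ 0 := by
      intro hb0
      apply hab
      have h0 : a ^ (p ^ m) * a = 0 := by rw [hdet, hb0]; ring
      have ha0 : a = 0 := by
        rcases mul_eq_zero.mp h0 with h | h
        · exact pow_eq_zero_iff (pow_ne_zero m hp.ne_zero) |>.mp h
        · exact h
      rw [ha0, hb0]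
    have hsurj : Function.Surjective (fun x : F => x ^ p ^ k) :=
      Finite.surjective_of_injective (fun x y hxy => frob_inj p k hxy)
    obtain ⟨x₀, hx₀⟩ := hsurj (-(a ^ (p ^ m)) / b)
    simp only at hx₀
    have hsub : S ⊆ {-a / b, x₀} := by
      rintro x ⟨hU, hE⟩
      have hfact : (b * x + a) * (b * x ^ p ^ k + a ^ (p ^ m)) = 0 := by
        linear_combination b * hE + hdet
      rcases mul_eq_zero.mp hfact with h | h
      · left
        rw [eq_div_iff hb]
        linear_combination h
      · right
        apply frob_inj p k
        rw [hx₀, eq_div_iff hb]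
        linear_combination h
    have h2 : S.ncard ≤ 2 := by
      refine le_trans (Set.ncard_le_ncard hsub (Set.toFinite _)) ?_
      refine le_trans (Set.ncard_insert_le _ _) ?_
      simp
    simp only [Set.mem_insert_iff, Set.mem_singleton_iff]
    omega
  · by_cases hbig : S.ncard ≤ 2
    · simp only [Set.mem_insert_iff, Set.mem_singleton_iff]
      omega
    · push_neg at hbig
      have hfin : S.Finite := Set.toFinite _
      rw [Set.ncard_eq_toFinset_card _ hfin] at hbig
      obtain ⟨x₁, x₂, x₃, hm1, hm2, hm3, h12, h13, h23⟩ := Finset.two_lt_card_iff.mp hbig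
      rw [Set.Finite.mem_toFinset] at hm1 hm2 hm3
      obtain ⟨hU1, hE1⟩ := hm1
      obtain ⟨hU2, hE2⟩ := hm2
      obtain ⟨hU3, hE3⟩ := hm3
      have hx1ne : x₁ ≠ 0 := hUne _ hU1
      have hx2ne : x₂ ≠ 0 := hUne _ hU2
      have hq1 : x₁ ^ (p ^ m) * x₁ = 1 := hUq _ hU1
      have hq2 : x₂ ^ (p ^ m) * x₂ = 1 := hUq _ hU2
      -- denominators nonvanishing on U
      have hA : ∀ x : F, x ^ (p ^ m + 1) = 1 → b * x + a ≠ 0 := by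
        intro x hU h
        apply hdet
        have hxq := hUq x hU
        have ha : a = -(b * x) := by linear_combination h
        rw [ha]
        have e1 : (-(b * x)) ^ (p ^ m) = -(b ^ (p ^ m) * x ^ (p ^ m)) := by
          rw [neg_pow, hnegq, mul_pow]; ring
        rw [e1]
        linear_combination (b ^ (p ^ m) * b) * hxq
      have hB : ∀ x : F, x ^ (p ^ m + 1) = 1 → a ^ (p ^ m) * x + b ^ (p ^ m) ≠ 0 := by
        intro x hU h
        apply hdet
        have hxq := hUq x hU
        have h1 : b ^ (p ^ m) = -(a ^ (p ^ m) * x) := by linear_combination h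
        have h2 : b = -(a * x ^ (p ^ m)) := by
          calc b = (b ^ (p ^ m)) ^ (p ^ m) := (hQ b).symm
          _ = (-(a ^ (p ^ m) * x)) ^ (p ^ m) := by rw [h1]
          _ = -(a * x ^ (p ^ m)) := by rw [neg_pow, hnegq, mul_pow, hQ a]; ring
        rw [h1, h2]
        linear_combination (-(a ^ (p ^ m) * a)) * hxq
      have hA1 : b * x₁ + a ≠ 0 := hA _ hU1
      have hA2 : b * x₂ + a ≠ 0 := hA _ hU2
      -- key equivalences
      have key1 : ∀ x : F, x ≠ x₂ →
          (((x - x₁) / (x - x₂)) ^ (p ^ m) = x₂ / x₁ * ((x - x₁) / (x - x₂)) ↔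
            x ^ (p ^ m + 1) = 1) := by
        intro x hxne
        have hd1 : x - x₂ ≠ 0 := sub_ne_zero.mpr hxne
        have hd2 : x ^ (p ^ m) - x₂ ^ (p ^ m) ≠ 0 := by
          intro h; exact hxne (frob_inj p m (sub_eq_zero.mp h))
        have hrw : ((x - x₁) / (x - x₂)) ^ (p ^ m)
            = (x ^ (p ^ m) - x₁ ^ (p ^ m)) / (x ^ (p ^ m) - x₂ ^ (p ^ m)) := by
          rw [div_pow, sub_pow_char_pow, sub_pow_char_pow]
        rw [hrw, div_mul_div_comm, div_eq_div_iff hd2 (mul_ne_zero hx1ne hd1)]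
        constructor
        · intro h'
          have h'' : (x₁ - x₂) * (x ^ (p ^ m) * x - 1) = 0 := by
            linear_combination h' - (x₂ - x) * hq1 - (x - x₁) * hq2
          have h3 := (mul_eq_zero.mp h'').resolve_left (sub_ne_zero.mpr h12)
          linear_combination h3
        · intro h
          have hxq : x ^ (p ^ m) * x = 1 := by rw [← pow_succ]; exact h
          linear_combination (x₁ - x₂) * hxq + (x₂ - x) * hq1 + (x - x₁) * hq2
      have key2 : ∀ x : F, x ≠ x₂ →
          (((x - x₁) / (x - x₂)) ^ (p ^ k)
              = (b * x₂ + a) / (b * x₁ + a) * ((x - x₁) / (x - x₂)) ↔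
            b * x ^ (p ^ k + 1) + a * x ^ (p ^ k) + a ^ (p ^ m) * x + b ^ (p ^ m) = 0) := by
        intro x hxne
        have hd1 : x - x₂ ≠ 0 := sub_ne_zero.mpr hxne
        have hd2 : x ^ (p ^ k) - x₂ ^ (p ^ k) ≠ 0 := by
          intro h; exact hxne (frob_inj p k (sub_eq_zero.mp h))
        have hrw : ((x - x₁) / (x - x₂)) ^ (p ^ k)
            = (x ^ (p ^ k) - x₁ ^ (p ^ k)) / (x ^ (p ^ k) - x₂ ^ (p ^ k)) := by
          rw [div_pow, sub_pow_char_pow, sub_pow_char_pow]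
        rw [hrw, div_mul_div_comm, div_eq_div_iff hd2 (mul_ne_zero hA1 hd1)]
        constructor
        · intro h'
          have h'' : (x₁ - x₂) *
              (b * x ^ (p ^ k + 1) + a * x ^ (p ^ k) + a ^ (p ^ m) * x + b ^ (p ^ m)) = 0 := by
            linear_combination h' + (x - x₂) * hE1 - (x - x₁) * hE2
          exact (mul_eq_zero.mp h'').resolve_left (sub_ne_zero.mpr h12)
        · intro h
          linear_combination (x₁ - x₂) * h - (x - x₂) * hE1 + (x - x₁) * hE2
      -- third point data
      have hx31 : x₃ - x₁ ≠ 0 := sub_ne_zero.mpr (Ne.symm h13)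
      have hx32 : x₃ - x₂ ≠ 0 := sub_ne_zero.mpr (Ne.symm h23)
      set y₃ : F := (x₃ - x₁) / (x₃ - x₂) with hy₃def
      have hy₃0 : y₃ ≠ 0 := div_ne_zero hx31 hx32
      have hy₃q : y₃ ^ (p ^ m) = x₂ / x₁ * y₃ := (key1 x₃ (Ne.symm h23)).mpr hU3
      have hy₃k : y₃ ^ (p ^ k) = (b * x₂ + a) / (b * x₁ + a) * y₃ :=
        (key2 x₃ (Ne.symm h23)).mpr hE3
      set G : Set F := {s : F | s ^ (p ^ Nat.gcd k m - 1) = 1} with hGdef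
      set f : F → F := fun s => (x₂ * (y₃ * s) - x₁) / (y₃ * s - 1) with hfdef
      have hGs : ∀ s ∈ G, s ≠ 0 ∧ s ^ (p ^ k) = s ∧ s ^ (p ^ m) = s := by
        intro s hs
        have hs' : s ^ (p ^ Nat.gcd k m - 1) = 1 := hs
        have hs0 : s ≠ 0 := by
          intro h
          rw [h, zero_pow (by omega)] at hs'
          exact zero_ne_one hs'
        have hsd : s ^ (p ^ Nat.gcd k m) = s := by
          calc s ^ (p ^ Nat.gcd k m) = s ^ (p ^ Nat.gcd k m - 1 + 1) := by
                rw [Nat.sub_add_cancel (by omega)]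
          _ = s := by rw [pow_succ, hs', one_mul]
        refine ⟨hs0, ?_, ?_⟩
        · have h := frob_iter p (Nat.gcd k m) s hsd (k / Nat.gcd k m)
          rwa [Nat.mul_div_cancel' (Nat.gcd_dvd_left k m)] at h
        · have h := frob_iter p (Nat.gcd k m) s hsd (m / Nat.gcd k m)
          rwa [Nat.mul_div_cancel' (Nat.gcd_dvd_right k m)] at h
      have hfs : ∀ s ∈ G, f s ∈ S ∧ f s ≠ x₂ ∧ (f s - x₁) / (f s - x₂) = y₃ * s := by
        intro s hs
        obtain ⟨hs0, hsk, hsm⟩ := hGs s hs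
        have hy0 : y₃ * s ≠ 0 := mul_ne_zero hy₃0 hs0
        have hyq : (y₃ * s) ^ (p ^ m) = x₂ / x₁ * (y₃ * s) := by
          rw [mul_pow, hy₃q, hsm]; ring
        have hyk : (y₃ * s) ^ (p ^ k) = (b * x₂ + a) / (b * x₁ + a) * (y₃ * s) := by
          rw [mul_pow, hy₃k, hsk]; ring
        have hy1 : y₃ * s ≠ 1 := by
          intro h1
          rw [h1, one_pow, mul_one] at hyq
          exact h12 ((div_eq_one_iff_eq hx1ne).mp hyq.symm).symm
        have hy1' : y₃ * s - 1 ≠ 0 := sub_ne_zero.mpr hy1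
        have hfx2 : f s - x₂ = (x₂ - x₁) / (y₃ * s - 1) := by
          simp only [hfdef]
          field_simp
          ring
        have hne2 : f s - x₂ ≠ 0 := by
          rw [hfx2]
          exact div_ne_zero (sub_ne_zero.mpr (Ne.symm h12)) hy1'
        have hfne2 : f s ≠ x₂ := fun h => hne2 (by rw [h, sub_self])
        have hfx1 : f s - x₁ = (y₃ * s) * (x₂ - x₁) / (y₃ * s - 1) := by
          simp only [hfdef]
          field_simp
          ring
        have hratio : (f s - x₁) / (f s - x₂) = y₃ * s := by
          rw [div_eq_iff hne2, hfx1, hfx2]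
          ring
        refine ⟨⟨?_, ?_⟩, hfne2, hratio⟩
        · exact (key1 (f s) hfne2).mp (by rw [hratio]; exact hyq)
        · exact (key2 (f s) hfne2).mp (by rw [hratio]; exact hyk)
      have hSeq : S = insert x₁ (insert x₂ (f '' G)) := by
        ext x
        simp only [Set.mem_insert_iff, Set.mem_image]
        constructor
        · intro hx
          obtain ⟨hU, hE⟩ := hx
          by_cases e1 : x = x₁
          · exact Or.inl e1
          by_cases e2 : x = x₂
          · exact Or.inr (Or.inl e2)
          refine Or.inr (Or.inr ?_)
          have hxyq := (key1 x e2).mpr hU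
          have hxyk := (key2 x e2).mpr hE
          have hdx1 : x - x₁ ≠ 0 := sub_ne_zero.mpr e1
          have hdx2 : x - x₂ ≠ 0 := sub_ne_zero.mpr e2
          have hy0 : (x - x₁) / (x - x₂) ≠ 0 := div_ne_zero hdx1 hdx2
          have hlam1 : x₂ / x₁ ≠ 0 := div_ne_zero hx2ne hx1ne
          have hlam2 : (b * x₂ + a) / (b * x₁ + a) ≠ 0 := div_ne_zero hA2 hA1
          refine ⟨((x - x₁) / (x - x₂)) / y₃, ?_, ?_⟩
          · have hs0 : ((x - x₁) / (x - x₂)) / y₃ ≠ 0 := div_ne_zero hy0 hy₃0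
            have hsk : (((x - x₁) / (x - x₂)) / y₃) ^ (p ^ k)
                = ((x - x₁) / (x - x₂)) / y₃ := by
              rw [div_pow, hxyk, hy₃k, mul_div_mul_left _ _ hlam2]
            have hsm : (((x - x₁) / (x - x₂)) / y₃) ^ (p ^ m)
                = ((x - x₁) / (x - x₂)) / y₃ := by
              rw [div_pow, hxyq, hy₃q, mul_div_mul_left _ _ hlam1]
            have hsd := gcd_fix p (((x - x₁) / (x - x₂)) / y₃) k m hsk hsm
            show (((x - x₁) / (x - x₂)) / y₃) ^ (p ^ Nat.gcd k m - 1) = 1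
            have hmul : (((x - x₁) / (x - x₂)) / y₃) ^ (p ^ Nat.gcd k m - 1)
                * (((x - x₁) / (x - x₂)) / y₃) = 1 * (((x - x₁) / (x - x₂)) / y₃) := by
              rw [← pow_succ, Nat.sub_add_cancel (by omega), hsd, one_mul]
            exact mul_right_cancel₀ hs0 hmul
          · have hyy : y₃ * (((x - x₁) / (x - x₂)) / y₃) = (x - x₁) / (x - x₂) := by
              field_simp
            simp only [hfdef]
            rw [hyy]
            have hy1 : (x - x₁) / (x - x₂) - 1 ≠ 0 := by
              intro h
              apply h12
              rw [sub_eq_zero, div_eq_one_iff_eq hdx2] at h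
              linear_combination -h
            rw [div_eq_iff hy1]
            field_simp
            ring
        · rintro (rfl | rfl | ⟨s, hs, rfl⟩)
          · exact ⟨hU1, hE1⟩
          · exact ⟨hU2, hE2⟩
          · exact (hfs s hs).1
      -- counting
      have hGcard : G.ncard = p ^ Nat.gcd k m - 1 := by
        have hdvd : p ^ Nat.gcd k m - 1 ∣ Fintype.card F - 1 := by
          rw [hF]
          have hdvd2 : Nat.gcd k m ∣ m * 2 := Dvd.dvd.mul_right (Nat.gcd_dvd_right k m) 2
          have h1 : (p ^ Nat.gcd k m) ^ (m * 2 / Nat.gcd k m) = (p ^ m) ^ 2 := by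
            rw [← pow_mul, ← pow_mul, Nat.mul_div_cancel' hdvd2]
          calc p ^ Nat.gcd k m - 1
              ∣ (p ^ Nat.gcd k m) ^ (m * 2 / Nat.gcd k m) - 1 ^ (m * 2 / Nat.gcd k m) :=
                Nat.sub_dvd_pow_sub_pow _ 1 _
          _ = (p ^ m) ^ 2 - 1 := by rw [one_pow, h1]
        obtain ⟨g, hg⟩ := IsCyclic.exists_generator (α := Fˣ)
        have hog : orderOf g = Fintype.card Fˣ := by
          rw [orderOf_eq_card_of_forall_mem_zpowers hg, Nat.card_eq_fintype_card]
        have hdvd' : p ^ Nat.gcd k m - 1 ∣ orderOf g := by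
          rw [hog, Fintype.card_units]
          exact hdvd
        have hζ : orderOf (g ^ (orderOf g / (p ^ Nat.gcd k m - 1))) = p ^ Nat.gcd k m - 1 :=
          orderOf_pow_orderOf_div (orderOf_pos g).ne' hdvd'
        have hprim : IsPrimitiveRoot
            (((g ^ (orderOf g / (p ^ Nat.gcd k m - 1))) : Fˣ) : F) (p ^ Nat.gcd k m - 1) := by
          rw [IsPrimitiveRoot.coe_units_iff]
          have h := IsPrimitiveRoot.orderOf (g ^ (orderOf g / (p ^ Nat.gcd k m - 1)))
          rwa [hζ] at h
        have hGfin : G = ↑(Polynomial.nthRootsFinset (p ^ Nat.gcd k m - 1) (1 : F)) := by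
          ext s
          rw [Finset.mem_coe, Polynomial.mem_nthRootsFinset (by omega)]
          rfl
        rw [hGfin, Set.ncard_coe_finset, hprim.card_nthRootsFinset]
      have hinj : Set.InjOn f G := by
        intro s hs s' hs' hss
        have h1 := (hfs s hs).2.2
        have h2 := (hfs s' hs').2.2
        rw [hss, h2] at h1
        exact mul_left_cancel₀ hy₃0 h1.symm
      have hx2not : x₂ ∉ f '' G := by
        rintro ⟨s, hs, h⟩
        exact (hfs s hs).2.1 h
      have hx1not : x₁ ∉ insert x₂ (f '' G) := by
        simp only [Set.mem_insert_iff, Set.mem_image]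
        push_neg
        refine ⟨h12, ?_⟩
        rintro s hs h
        have h3 := (hfs s hs).2.2
        rw [h, sub_self, zero_div] at h3
        exact mul_ne_zero hy₃0 (hGs s hs).1 h3.symm
      have hcount : S.ncard = p ^ Nat.gcd k m + 1 := by
        rw [hSeq, Set.ncard_insert_of_notMem hx1not (Set.toFinite _),
          Set.ncard_insert_of_notMem hx2not (Set.toFinite _),
          Set.ncard_image_of_injOn hinj, hGcard]
        omega
      rw [hcount]
      simp
end

section
/- Let p be a prime, m a positive integer, q = p^m, and r and s in F_q with (r,s) ≠ (0,0). Then the linearized polynomial r y^{p^k} + s y has either exactly 1 or exactly p^{gcd(k,m)} roots in F_q. -/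
private lemma aux_mod (p a b : ℕ) (hp2 : 2 ≤ p) (ha : 0 < a) :
    (p ^ b - 1) % (p ^ a - 1) = p ^ (b % a) - 1 := by
  obtain ⟨t, ht⟩ : p ^ a - 1 ∣ p ^ (a * (b / a)) - 1 := by
    rw [pow_mul]; simpa using Nat.sub_dvd_pow_sub_pow (p ^ a) 1 (b / a)
  have h1 : 1 ≤ p ^ (a * (b / a)) := Nat.one_le_pow _ _ (by omega)
  have h2 : 1 ≤ p ^ (b % a) := Nat.one_le_pow _ _ (by omega)
  have h3 : 1 ≤ p ^ a := Nat.one_le_pow _ _ (by omega)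
  have ht' : p ^ (a * (b / a)) = (p ^ a - 1) * t + 1 := by omega
  have key : p ^ b = (p ^ a - 1) * (t * p ^ (b % a)) + p ^ (b % a) := by
    calc p ^ b = p ^ (a * (b / a)) * p ^ (b % a) := by
          rw [← pow_add, Nat.div_add_mod]
      _ = ((p ^ a - 1) * t + 1) * p ^ (b % a) := by rw [ht']
      _ = (p ^ a - 1) * (t * p ^ (b % a)) + p ^ (b % a) := by ring
  have hlt : p ^ (b % a) - 1 < p ^ a - 1 := by
    have : p ^ (b % a) < p ^ a :=
      Nat.pow_lt_pow_right (by omega) (Nat.mod_lt b ha)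
    omega
  have e : p ^ b - 1 = (p ^ a - 1) * (t * p ^ (b % a)) + (p ^ (b % a) - 1) := by omega
  rw [e, Nat.mul_add_mod, Nat.mod_eq_of_lt hlt]

private lemma aux_gcd (p : ℕ) (hp2 : 2 ≤ p) :
    ∀ a b : ℕ, Nat.gcd (p ^ a - 1) (p ^ b - 1) = p ^ Nat.gcd a b - 1 := by
  intro a
  induction a using Nat.strong_induction_on with
  | _ a ih =>
    intro b
    rcases Nat.eq_zero_or_pos a with rfl | ha
    · simp
    · have hpa : 1 < p ^ a := Nat.one_lt_pow (by omega) (by omega)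
      rw [Nat.gcd_rec (p ^ a - 1) (p ^ b - 1), aux_mod p a b hp2 ha,
        ih (b % a) (Nat.mod_lt b ha) a, Nat.gcd_rec a b]

theorem stmt_3 (p m k : ℕ) (hp : p.Prime) (hm : 0 < m) (hk : 0 < k)
    (F : Type*) [Field F] [Fintype F] (hF : Fintype.card F = p ^ m)
    (r s : F) (hrs : (r, s) ≠ (0, 0)) :
    Set.ncard {y : F | r * y ^ (p ^ k) + s * y = 0} = 1 ∨
      Set.ncard {y : F | r * y ^ (p ^ k) + s * y = 0} = p ^ Nat.gcd k m := by
  classical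
  have hq2 : 2 ≤ p := hp.two_le
  have hpk2 : 2 ≤ p ^ k := by
    calc 2 = 2 ^ 1 := rfl
    _ ≤ p ^ k := Nat.pow_le_pow_left hq2 1 |>.trans (Nat.pow_le_pow_right (by omega) hk)
  by_cases hr : r = 0
  · subst hr
    have hs : s ≠ 0 := by
      intro h; exact hrs (by simp [h])
    left
    have : {y : F | 0 * y ^ (p ^ k) + s * y = 0} = {0} := by
      ext y; simp [mul_eq_zero, hs]
    rw [this, Set.ncard_singleton]
  by_cases hs : s = 0
  · subst hs
    left
    have : {y : F | r * y ^ (p ^ k) + 0 * y = 0} = {0} := by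
      ext y
      simp only [Set.mem_setOf_eq, Set.mem_singleton_iff, zero_mul, add_zero]
      rw [mul_eq_zero, pow_eq_zero_iff (by positivity)]
      simp [hr]
    rw [this, Set.ncard_singleton]
  -- main case: r ≠ 0, s ≠ 0
  set d : ℕ := p ^ k - 1 with hd_def
  have hd : 0 < d := by omega
  have hpm1 : 1 ≤ p ^ m := Nat.one_le_pow _ _ (by omega)
  have hpm2 : 2 ≤ p ^ m := by
    calc 2 = 2 ^ 1 := rfl
    _ ≤ p ^ m := Nat.pow_le_pow_left hq2 1 |>.trans (Nat.pow_le_pow_right (by omega) hm)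
  set g : ℕ := Nat.gcd d (p ^ m - 1) with hg_def
  have hg_eq : g = p ^ Nat.gcd k m - 1 := aux_gcd p hq2 k m
  have hpg1 : 1 ≤ p ^ Nat.gcd k m := Nat.one_le_pow _ _ (by omega)
  have hg_pos : 0 < g := by
    have : 1 < p ^ Nat.gcd k m := Nat.one_lt_pow (Nat.gcd_ne_zero_left (by omega)) (by omega)
    omega
  have hgdvd : g ∣ p ^ m - 1 := Nat.gcd_dvd_right _ _
  have hgdvd_d : g ∣ d := Nat.gcd_dvd_left _ _
  have hNcard : Fintype.card Fˣ = p ^ m - 1 := by rw [Fintype.card_units, hF]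
  -- primitive g-th root of unity
  obtain ⟨u, hu⟩ := IsCyclic.exists_ofOrder_eq_natCard (α := Fˣ)
  have hu' : orderOf u = p ^ m - 1 := by rw [hu, Nat.card_eq_fintype_card, hNcard]
  set ζ : Fˣ := u ^ ((p ^ m - 1) / g) with hζ_def
  have hζord : orderOf ζ = g := by
    rw [hζ_def, orderOf_pow, hu', Nat.gcd_eq_right (Nat.div_dvd_of_dvd hgdvd),
      Nat.div_div_self hgdvd (by omega)]
  have hζ : IsPrimitiveRoot ((ζ : F)) g :=
    IsPrimitiveRoot.coe_units_iff.mpr (hζord ▸ IsPrimitiveRoot.orderOf ζ)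
  -- the set of d-th roots of unity has exactly g elements
  have hR1 : {z : F | z ^ d = 1} = ↑(Polynomial.nthRootsFinset g (1 : F)) := by
    ext z
    simp only [Set.mem_setOf_eq, Finset.coe_sort_coe, Finset.mem_coe,
      Polynomial.mem_nthRootsFinset hg_pos (1 : F)]
    constructor
    · intro hzd
      have hz0 : z ≠ 0 := by
        intro h; rw [h, zero_pow hd.ne'] at hzd; exact zero_ne_one hzd
      set w : Fˣ := Units.mk0 z hz0 with hw
      have hwd : w ^ d = 1 := by
        ext; push_cast; simpa [hw] using hzd
      have hwg : w ^ g = 1 := by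
        have := pow_gcd_eq_one.mpr ⟨hwd, (show w ^ (p ^ m - 1) = 1 by rw [← hNcard]; exact pow_card_eq_one)⟩
        exact this
      have := congrArg (Units.val) hwg
      push_cast at this
      simpa [hw] using this
    · intro hzg
      obtain ⟨c, hc⟩ := hgdvd_d
      rw [hc, pow_mul, hzg, one_pow]
  have hcard1 : {z : F | z ^ d = 1}.ncard = g := by
    rw [hR1, Set.ncard_coe_finset, hζ.card_nthRootsFinset]
  -- rewrite the root set
  set c : F := -s / r with hc_def
  have hc : c ≠ 0 := by
    rw [hc_def]
    exact div_ne_zero (neg_ne_zero.mpr hs) hr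
  have hpk : p ^ k = d + 1 := by omega
  have hset : {y : F | r * y ^ (p ^ k) + s * y = 0} = insert (0 : F) {y : F | y ^ d = c} := by
    ext y
    simp only [Set.mem_setOf_eq, Set.mem_insert_iff]
    have factored : r * y ^ (p ^ k) + s * y = (r * y ^ d + s) * y := by
      rw [hpk, pow_succ]; ring
    rw [factored, mul_eq_zero]
    have hiff : r * y ^ d + s = 0 ↔ y ^ d = c := by
      rw [hc_def, eq_div_iff hr]
      constructor <;> intro h <;> linear_combination h
    tauto
  have h0notin : (0 : F) ∉ {y : F | y ^ d = c} := by
    simp only [Set.mem_setOf_eq, zero_pow hd.ne']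
    exact fun h => hc h.symm
  rw [hset, Set.ncard_insert_of_notMem h0notin (Set.toFinite _)]
  by_cases hT : {y : F | y ^ d = c} = ∅
  · left; rw [hT]; simp
  · right
    obtain ⟨y0, hy0⟩ := Set.nonempty_iff_ne_empty.2 hT
    have hy0' : y0 ^ d = c := hy0
    have hy0ne : y0 ≠ 0 := by
      intro h; rw [h, zero_pow hd.ne'] at hy0'; exact hc hy0'.symm
    have himg : {y : F | y ^ d = c} = (fun z => y0 * z) '' {z : F | z ^ d = 1} := by
      ext y
      simp only [Set.mem_setOf_eq, Set.mem_image]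
      constructor
      · intro hy
        refine ⟨y / y0, ?_, by field_simp⟩
        rw [div_pow, hy, hy0']
        exact div_self hc
      · rintro ⟨z, hz, rfl⟩
        rw [mul_pow, hz, hy0', mul_one]
    rw [himg, Set.ncard_image_of_injective _ (mul_right_injective₀ hy0ne), hcard1, hg_eq]
    omega
end

section
/- Let q be a prime power, r | (q+1) with ν₂(r) = ν₂(q+1), δ in F_{q^4}^* of order r(q^2+1), λ = δ^{q^2+1}, and T = {δ^{-i} : 0 ≤ i ≤ q^2}. Let f(x) = x^{q+1} on U_{r(q^2+1)}. Then for every y₀ in U_{q^2+1} and every j with 0 ≤ j ≤ r-1, the fiber f^{-1}(y₀) intersects λ^j T in exactly one element. Moreover, if f(x₀) = y₀, then f^{-1}(y₀) = { λ^j x₀ : 0 ≤ j ≤ r-1 }. -/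
theorem stmt_10 (q r : ℕ) (hq : ∃ (p n : ℕ), p.Prime ∧ 0 < n ∧ q = p ^ n)
    (hr : 0 < r) (hdvd : r ∣ q + 1)
    (hν : padicValNat 2 r = padicValNat 2 (q + 1))
    (F : Type*) [Field F] [Fintype F] (hF : Fintype.card F = q ^ 4)
    (δ : F) (hδ : orderOf δ = r * (q ^ 2 + 1))
    (y₀ : F) (hy₀ : y₀ ^ (q ^ 2 + 1) = 1) :
    (∀ j < r, Set.ncard ({x : F | x ^ (r * (q ^ 2 + 1)) = 1 ∧ x ^ (q + 1) = y₀} ∩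
        {x : F | ∃ i ≤ q ^ 2, x = (δ ^ (q ^ 2 + 1)) ^ j * δ⁻¹ ^ i}) = 1) ∧
    (∀ x₀ : F, x₀ ^ (r * (q ^ 2 + 1)) = 1 → x₀ ^ (q + 1) = y₀ →
      {x : F | x ^ (r * (q ^ 2 + 1)) = 1 ∧ x ^ (q + 1) = y₀} =
        {x : F | ∃ j < r, x = (δ ^ (q ^ 2 + 1)) ^ j * x₀}) := by
  have hq2 : 2 ≤ q := by
    obtain ⟨p, n, hp, hn, rfl⟩ := hq
    calc 2 ≤ p := hp.two_le
    _ = p ^ 1 := (pow_one p).symm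
    _ ≤ p ^ n := Nat.pow_le_pow_right hp.pos hn
  obtain ⟨s, hs⟩ := hdvd
  have hs0 : s ≠ 0 := by rintro rfl; omega
  set m := q ^ 2 + 1 with hm
  have hm1 : 1 < m := by have : 1 ≤ q ^ 2 := Nat.one_le_pow _ _ (by omega); omega
  have hm0 : 0 < m := by omega
  -- coprimality of s := (q+1)/r and m := q^2+1
  have hcop : Nat.Coprime s m := by
    have hsd : s ∣ q + 1 := ⟨r, by rw [hs]; ring⟩
    have hg2 : Nat.gcd s m ∣ 2 := by
      have h1 : Nat.gcd s m ∣ (q + 1) * (q - 1) := ((Nat.gcd_dvd_left s m).trans hsd).mul_right _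
      have h2 : Nat.gcd s m ∣ m := Nat.gcd_dvd_right s m
      have key : m = (q + 1) * (q - 1) + 2 := by
        obtain ⟨a, rfl⟩ : ∃ a, q = a + 1 := ⟨q - 1, by omega⟩
        simp only [hm, Nat.add_sub_cancel]
        ring
      set g := Nat.gcd s m with hg
      have := Nat.dvd_sub h2 h1
      rw [key, Nat.add_sub_cancel_left] at this
      exact this
    have hodd : ¬ 2 ∣ Nat.gcd s m := by
      intro h2d
      have h2s : 2 ∣ s := h2d.trans (Nat.gcd_dvd_left s m)
      have hmul := padicValNat.mul (p := 2) hr.ne' hs0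
      rw [← hs] at hmul
      have : 1 ≤ padicValNat 2 s :=
        one_le_padicValNat_of_dvd hs0 h2s
      omega
    rcases (Nat.dvd_prime Nat.prime_two).mp hg2 with h | h
    · exact h
    · exact absurd (by rw [h] : 2 ∣ Nat.gcd s m) hodd
  have hgcd : Nat.gcd (q + 1) (r * m) = r := by
    rw [hs, Nat.gcd_mul_left, hcop, mul_one]
  -- basic facts about δ and λ
  have hδn : δ ^ (r * m) = 1 := by rw [← hδ]; exact pow_orderOf_eq_one δ
  have hrm0 : r * m ≠ 0 := Nat.mul_ne_zero hr.ne' hm0.ne'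
  set lam := δ ^ m with hlam
  have hpowpow : ∀ (x : F) (a b : ℕ), (x ^ a) ^ b = (x ^ b) ^ a := by
    intro x a b
    rw [← pow_mul, ← pow_mul, Nat.mul_comm]
  have hordlam : orderOf lam = r := by
    rw [hlam, orderOf_pow' δ hm0.ne', hδ, Nat.gcd_comm,
      Nat.gcd_eq_left (dvd_mul_left m r), Nat.mul_div_cancel _ hm0]
  have hlamq1 : lam ^ (q + 1) = 1 := by
    rw [hlam, ← pow_mul δ m (q + 1)]
    refine orderOf_dvd_iff_pow_eq_one.mp ?_
    rw [hδ, hs]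
    exact ⟨s, by ring⟩
  have hlamrm : lam ^ (r * m) = 1 := by
    rw [hlam, hpowpow δ m (r * m), hδn, one_pow]
  have hy0ne : y₀ ≠ 0 := by
    intro h; rw [h, zero_pow hm0.ne'] at hy₀; exact zero_ne_one hy₀
  -- δ as a unit; exponents of δ are well-defined mod r*m
  obtain ⟨u, hu⟩ := IsUnit.of_pow_eq_one hδn hrm0
  have hmodeq : ∀ A B : ℕ, δ ^ A = δ ^ B → A ≡ B [MOD r * m] := by
    intro A B hAB
    have h1 : u ^ A = u ^ B := Units.ext (by simpa [hu] using hAB)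
    have h2 : A ≡ B [MOD orderOf u] := pow_eq_pow_iff_modEq.mp h1
    rwa [← orderOf_units, hu, hδ] at h2
  -- r-th roots of unity are powers of lam
  haveI : NeZero r := ⟨hr.ne'⟩
  have hprim : IsPrimitiveRoot lam r := hordlam ▸ IsPrimitiveRoot.orderOf lam
  have hkey : ∀ x : F, x ^ r = 1 → ∃ k < r, lam ^ k = x := fun x hx =>
    hprim.eq_pow_of_pow_eq_one hx
  have hred : ∀ x : F, x ^ (r * m) = 1 → x ^ (q + 1) = 1 → x ^ r = 1 := by
    intro x h1 h2
    have := Nat.dvd_gcd (orderOf_dvd_of_pow_eq_one h2) (orderOf_dvd_of_pow_eq_one h1)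
    rw [hgcd] at this
    exact orderOf_dvd_iff_pow_eq_one.mp this
  constructor
  · -- part (1)
    haveI : NeZero m := ⟨hm0.ne'⟩
    have hordμ : orderOf (δ ^ r) = m := by
      rw [orderOf_pow' δ hr.ne', hδ, Nat.gcd_comm,
        Nat.gcd_eq_left (dvd_mul_right r m), Nat.mul_comm, Nat.mul_div_cancel _ hr]
    have hprimμ : IsPrimitiveRoot (δ ^ r) m := hordμ ▸ IsPrimitiveRoot.orderOf (δ ^ r)
    obtain ⟨a, ha, haa⟩ := hprimμ.eq_pow_of_pow_eq_one hy₀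
    obtain ⟨t, -, ht⟩ := Nat.exists_mul_mod_eq_one_of_coprime hcop hm1
    intro j hj
    set i₁ := (t * (m - a % m)) % m with hi₁
    have hi₁lt : i₁ < m := Nat.mod_lt _ hm0
    have hdm : m ∣ s * i₁ + a := by
      have e12 : s * i₁ ≡ (m - a % m) [MOD m] := by
        calc s * i₁ ≡ s * (t * (m - a % m)) [MOD m] :=
              Nat.ModEq.mul_left s (Nat.mod_modEq _ m)
        _ = s * t * (m - a % m) := by ring
        _ ≡ 1 * (m - a % m) [MOD m] := by
              refine Nat.ModEq.mul_right _ ?_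
              show s * t % m = 1 % m
              rw [Nat.mod_eq_of_lt hm1]; exact ht
        _ = (m - a % m) := one_mul _
      have e3 : s * i₁ + a ≡ (m - a % m) + a % m [MOD m] :=
        e12.add ((Nat.mod_modEq a m).symm)
      have e5 : s * i₁ + a ≡ 0 [MOD m] := by
        calc s * i₁ + a ≡ (m - a % m) + a % m [MOD m] := e3
        _ = m := Nat.sub_add_cancel (Nat.mod_lt a hm0).le
        _ ≡ 0 [MOD m] := (Nat.modEq_zero_iff_dvd).mpr dvd_rfl
      exact (Nat.modEq_zero_iff_dvd).mp e5
    -- power computations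
    have hpowq1 : ∀ i : ℕ, (lam ^ j * δ⁻¹ ^ i) ^ (q + 1) = (δ ^ (i * (q + 1)))⁻¹ := by
      intro i
      rw [mul_pow, hpowpow lam j (q + 1), hlamq1, one_pow, one_mul, inv_pow δ i,
        inv_pow (δ ^ i) (q + 1), ← pow_mul δ i (q + 1)]
    have hpown : ∀ i : ℕ, (lam ^ j * δ⁻¹ ^ i) ^ (r * m) = 1 := by
      intro i
      rw [mul_pow, hpowpow lam j (r * m), hlamrm, one_pow, one_mul, inv_pow δ i,
        inv_pow (δ ^ i) (r * m), hpowpow δ i (r * m), hδn, one_pow, inv_one]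
    -- x₁ := lam^j * δ⁻¹^i₁ is in the fiber
    have hx₁q1 : (lam ^ j * δ⁻¹ ^ i₁) ^ (q + 1) = y₀ := by
      rw [hpowq1 i₁, ← haa, ← pow_mul δ r a]
      obtain ⟨c, hc⟩ := hdm
      have hmm : δ ^ (r * a) * δ ^ (i₁ * (q + 1)) = 1 := by
        rw [← pow_add]
        refine orderOf_dvd_iff_pow_eq_one.mp ?_
        rw [hδ]
        exact ⟨c, by rw [hs]
                     calc r * a + i₁ * (r * s) = r * (s * i₁ + a) := by ring
                     _ = r * (m * c) := by rw [hc]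
                     _ = r * m * c := by ring⟩
      exact inv_eq_of_mul_eq_one_left hmm
    -- the intersection is the singleton {x₁}
    have hset : ({x : F | x ^ (r * m) = 1 ∧ x ^ (q + 1) = y₀} ∩
        {x : F | ∃ i ≤ q ^ 2, x = lam ^ j * δ⁻¹ ^ i}) = {lam ^ j * δ⁻¹ ^ i₁} := by
      ext x
      simp only [Set.mem_inter_iff, Set.mem_setOf_eq, Set.mem_singleton_iff]
      constructor
      · rintro ⟨⟨hxn, hxq⟩, i, hi, rfl⟩
        have heq : (δ ^ (i * (q + 1)))⁻¹ = (δ ^ (i₁ * (q + 1)))⁻¹ := by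
          rw [← hpowq1 i, ← hpowq1 i₁, hxq, hx₁q1]
        have heq2 : δ ^ (i * (q + 1)) = δ ^ (i₁ * (q + 1)) := inv_injective heq
        have hmod : i * (q + 1) ≡ i₁ * (q + 1) [MOD r * m] := hmodeq _ _ heq2
        have hmod2 : i * s ≡ i₁ * s [MOD m] := by
          refine Nat.ModEq.mul_right_cancel' (c := r) hr.ne' ?_
          have h1 : i * s * r = i * (q + 1) := by rw [hs]; ring
          have h2 : i₁ * s * r = i₁ * (q + 1) := by rw [hs]; ring
          rw [h1, h2, Nat.mul_comm m r]
          exact hmod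
        have hmod3 : i ≡ i₁ [MOD m] :=
          Nat.ModEq.cancel_right_of_coprime (by rw [Nat.gcd_comm]; exact hcop) hmod2
        have hii : i = i₁ := by
          have h1 : i % m = i₁ % m := hmod3
          rwa [Nat.mod_eq_of_lt (by omega), Nat.mod_eq_of_lt hi₁lt] at h1
        rw [hii]
      · rintro rfl
        exact ⟨⟨hpown i₁, hx₁q1⟩, i₁, by omega, rfl⟩
    rw [hset]
    exact Set.ncard_singleton _
  · -- part (2)
    intro x₀ hx1 hx2
    have hx₀0 : x₀ ≠ 0 := by
      intro h; rw [h, zero_pow hrm0] at hx1; exact zero_ne_one hx1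
    ext x
    simp only [Set.mem_setOf_eq]
    constructor
    · rintro ⟨hxn, hxq⟩
      have hz1 : (x * x₀⁻¹) ^ (r * m) = 1 := by
        rw [mul_pow, inv_pow, hxn, hx1, inv_one, mul_one]
      have hz2 : (x * x₀⁻¹) ^ (q + 1) = 1 := by
        rw [mul_pow, inv_pow, hxq, hx2, mul_inv_cancel₀ hy0ne]
      obtain ⟨k, hk, hkx⟩ := hkey _ (hred _ hz1 hz2)
      refine ⟨k, hk, ?_⟩
      rw [hkx]
      field_simp
    · rintro ⟨k, hk, rfl⟩
      constructor
      · rw [mul_pow, hx1, mul_one, hpowpow lam k (r * m), hlamrm, one_pow]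
      · rw [mul_pow, hx2, hpowpow lam k (q + 1), hlamq1, one_pow, one_mul]
end

section
/- Let q be a prime power and r a positive integer with r | (q-1) and ν₂(r) = ν₂(q-1). Let U_{r(q^2+1)} and U_{q^2+1} be the groups of r(q^2+1)-th and (q^2+1)-th roots of unity in F_{q^4}^*. Then the map h(x) = x^{q-1} is a surjective map from U_{r(q^2+1)} onto U_{q^2+1}, and each fiber has exactly r elements. -/
open Polynomial Finset

theorem stmt_11 (q r : ℕ) (hq : ∃ (p n : ℕ), p.Prime ∧ 0 < n ∧ q = p ^ n)
    (hr : 0 < r) (hdvd : r ∣ q - 1)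
    (hν : padicValNat 2 r = padicValNat 2 (q - 1))
    (F : Type*) [Field F] [Fintype F] (hF : Fintype.card F = q ^ 4) :
    (∀ x : F, x ^ (r * (q ^ 2 + 1)) = 1 → (x ^ (q - 1)) ^ (q ^ 2 + 1) = 1) ∧
    (∀ y : F, y ^ (q ^ 2 + 1) = 1 →
      ∃ x : F, x ^ (r * (q ^ 2 + 1)) = 1 ∧ x ^ (q - 1) = y) ∧
    (∀ y : F, y ^ (q ^ 2 + 1) = 1 →
      Set.ncard {x : F | x ^ (r * (q ^ 2 + 1)) = 1 ∧ x ^ (q - 1) = y} = r) := by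
  classical
  -- q ≥ 2
  have hq2 : 2 ≤ q := by
    obtain ⟨p, n, hp, hn, rfl⟩ := hq
    calc 2 ≤ p := hp.two_le
    _ = p ^ 1 := (pow_one p).symm
    _ ≤ p ^ n := Nat.pow_le_pow_right hp.pos hn
  obtain ⟨k, rfl⟩ : ∃ k, q = k + 2 := ⟨q - 2, by omega⟩
  set q : ℕ := k + 2 with hqdef
  have hq1 : q - 1 = k + 1 := by omega
  -- write q - 1 = r * s
  obtain ⟨s, hs⟩ := hdvd
  have hs0 : s ≠ 0 := by
    intro h; rw [h, Nat.mul_zero] at hs; omega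
  -- s is odd
  have hsodd : ¬ (2 ∣ s) := by
    have h2 : padicValNat 2 (q - 1) = padicValNat 2 r + padicValNat 2 s := by
      rw [hs]; exact padicValNat.mul (by omega) hs0
    have hvs : padicValNat 2 s = 0 := by omega
    intro hdvd2
    rcases (padicValNat.eq_zero_iff (p := 2) (n := s)).mp hvs with h | h | h
    · omega
    · exact hs0 h
    · exact h hdvd2
  -- gcd computation: gcd (r*(q^2+1)) (q-1) = r
  have hgcd : Nat.gcd (r * (q ^ 2 + 1)) (q - 1) = r := by
    have hcop : Nat.gcd (q ^ 2 + 1) s = 1 := by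
      set d := Nat.gcd (q ^ 2 + 1) s with hd
      have hd1 : d ∣ q ^ 2 + 1 := Nat.gcd_dvd_left _ _
      have hd2 : d ∣ s := Nat.gcd_dvd_right _ _
      have hd3 : d ∣ q - 1 := hd2.trans ⟨r, by rw [hs, Nat.mul_comm]⟩
      have hd4 : d ∣ (q - 1) * (q + 1) := hd3.mul_right _
      have hd5 : d ∣ 2 := by
        have h := Nat.dvd_sub hd1 hd4
        have heq : q ^ 2 + 1 - (q - 1) * (q + 1) = 2 := by
          rw [hq1]
          have : q ^ 2 + 1 = (k + 1) * (q + 1) + 2 := by ring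
          omega
        rwa [heq] at h
      have hdpos : 0 < d := Nat.pos_of_dvd_of_pos hd1 (by positivity)
      have hdle : d ≤ 2 := Nat.le_of_dvd (by norm_num) hd5
      interval_cases d
      · rfl
      · exact absurd hd2 hsodd
    calc Nat.gcd (r * (q ^ 2 + 1)) (q - 1)
        = Nat.gcd (r * (q ^ 2 + 1)) (r * s) := by rw [hs]
      _ = r * Nat.gcd (q ^ 2 + 1) s := Nat.gcd_mul_left r _ _
      _ = r := by rw [hcop, Nat.mul_one]
  -- part 1 helper
  set N : ℕ := r * (q ^ 2 + 1) with hN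
  have hN0 : 0 < N := by positivity
  have part1 : ∀ x : F, x ^ N = 1 → (x ^ (q - 1)) ^ (q ^ 2 + 1) = 1 := by
    intro x hx
    have hmul : (q - 1) * (q ^ 2 + 1) = N * s := by rw [hN, hs]; ring
    rw [← pow_mul, hmul, pow_mul, hx, one_pow]
  -- cardinality of F^4 - 1 and divisibilities
  have hM : q ^ 4 - 1 = (q - 1) * ((q + 1) * (q ^ 2 + 1)) := by
    rw [hq1]
    have : q ^ 4 = (k + 1) * ((q + 1) * (q ^ 2 + 1)) + 1 := by ring
    omega
  have hNM : N ∣ q ^ 4 - 1 := by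
    rw [hM, hN]
    exact mul_dvd_mul ⟨s, hs⟩ ⟨q + 1, by ring⟩
  have hBM : q ^ 2 + 1 ∣ q ^ 4 - 1 := ⟨(q - 1) * (q + 1), by rw [hM]; ring⟩
  have hrM : r ∣ q ^ 4 - 1 := ⟨s * ((q + 1) * (q ^ 2 + 1)), by rw [hM, hs]; ring⟩
  have hM0 : 0 < q ^ 4 - 1 := by
    have : 2 ^ 4 ≤ q ^ 4 := Nat.pow_le_pow_left hq2 4
    omega
  -- primitive root of unity of order q^4 - 1
  obtain ⟨g, hg⟩ := IsCyclic.exists_generator (α := Fˣ)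
  have hgord : orderOf g = q ^ 4 - 1 := by
    rw [orderOf_eq_card_of_forall_mem_zpowers hg, Nat.card_eq_fintype_card, Fintype.card_units, hF]
  have hζ : IsPrimitiveRoot (g : F) (q ^ 4 - 1) := by
    have := IsPrimitiveRoot.orderOf g
    rw [hgord] at this
    exact IsPrimitiveRoot.coe_units_iff.mpr this
  have hprim : ∀ n : ℕ, n ∣ q ^ 4 - 1 →
      IsPrimitiveRoot ((g : F) ^ ((q ^ 4 - 1) / n)) n := by
    intro n hn
    exact hζ.pow hM0 (Nat.div_mul_cancel hn).symm
  -- the three root-of-unity finsets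
  have hcardA : (nthRootsFinset N (1 : F)).card = N := (hprim N hNM).card_nthRootsFinset
  have hcardB : (nthRootsFinset (q ^ 2 + 1) (1 : F)).card = q ^ 2 + 1 :=
    (hprim _ hBM).card_nthRootsFinset
  have hcardC : (nthRootsFinset r (1 : F)).card = r := (hprim r hrM).card_nthRootsFinset
  have hmemA : ∀ x : F, x ∈ nthRootsFinset N (1 : F) ↔ x ^ N = 1 := fun x =>
    mem_nthRootsFinset hN0 1
  have hmemB : ∀ x : F, x ∈ nthRootsFinset (q ^ 2 + 1) (1 : F) ↔ x ^ (q ^ 2 + 1) = 1 :=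
    fun x => mem_nthRootsFinset (by positivity) 1
  have hmemC : ∀ x : F, x ∈ nthRootsFinset r (1 : F) ↔ x ^ r = 1 := fun x =>
    mem_nthRootsFinset hr 1
  -- each nonempty fiber has r elements
  have key : ∀ y : F, ∀ x₀ ∈ nthRootsFinset N (1 : F), x₀ ^ (q - 1) = y →
      ((nthRootsFinset N (1 : F)).filter (fun x => x ^ (q - 1) = y)).card = r := by
    intro y x₀ hx₀A hx₀
    rw [← hcardC]
    have hx₀N : x₀ ^ N = 1 := (hmemA x₀).mp hx₀A
    have hx₀ne : x₀ ≠ 0 := by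
      intro h; rw [h, zero_pow hN0.ne'] at hx₀N; exact zero_ne_one hx₀N
    apply Finset.card_bij' (fun x _ => x₀⁻¹ * x) (fun u _ => x₀ * u)
    · intro x hx
      simp only [Finset.mem_filter, hmemA] at hx
      obtain ⟨hxN, hxq⟩ := hx
      rw [hmemC]
      have h1 : (x₀⁻¹ * x) ^ N = 1 := by
        rw [mul_pow, inv_pow, hx₀N, hxN, inv_one, one_mul]
      have h2 : (x₀⁻¹ * x) ^ (q - 1) = 1 := by
        rw [mul_pow, inv_pow, hx₀, hxq, inv_mul_cancel₀]
        intro h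
        have := part1 x hxN
        rw [hxq, h, zero_pow (by positivity : (q ^ 2 + 1) ≠ 0)] at this
        exact zero_ne_one this
      have hord : orderOf (x₀⁻¹ * x) ∣ r := by
        rw [← hgcd]
        exact Nat.dvd_gcd (orderOf_dvd_of_pow_eq_one h1) (orderOf_dvd_of_pow_eq_one h2)
      exact orderOf_dvd_iff_pow_eq_one.mp hord
    · intro u hu
      rw [hmemC] at hu
      have huq : u ^ (q - 1) = 1 := by
        obtain ⟨c, hc⟩ : r ∣ q - 1 := ⟨s, hs⟩
        rw [hc, pow_mul, hu, one_pow]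
      simp only [Finset.mem_filter, hmemA]
      constructor
      · rw [mul_pow, hx₀N, one_mul, hN, pow_mul, hu, one_pow]
      · rw [mul_pow, hx₀, huq, mul_one]
    · intro x _; field_simp
    · intro u _; field_simp
  -- image of power map equals B
  have himage : (nthRootsFinset N (1 : F)).image (fun x => x ^ (q - 1)) =
      nthRootsFinset (q ^ 2 + 1) (1 : F) := by
    apply Finset.eq_of_subset_of_card_le
    · intro y hy
      rw [Finset.mem_image] at hy
      obtain ⟨x, hx, rfl⟩ := hy
      rw [hmemB]
      exact part1 x ((hmemA x).mp hx)
    · -- card B ≤ card image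
      have hsum := Finset.card_eq_sum_card_image (fun x : F => x ^ (q - 1))
        (nthRootsFinset N (1 : F))
      have hfib : ∀ y ∈ (nthRootsFinset N (1 : F)).image (fun x => x ^ (q - 1)),
          ((nthRootsFinset N (1 : F)).filter (fun x => x ^ (q - 1) = y)).card = r := by
        intro y hy
        rw [Finset.mem_image] at hy
        obtain ⟨x₀, hx₀, rfl⟩ := hy
        exact key _ x₀ hx₀ rfl
      rw [Finset.sum_congr rfl hfib, Finset.sum_const, smul_eq_mul, hcardA] at hsum
      have : ((nthRootsFinset N (1 : F)).image (fun x => x ^ (q - 1))).card = q ^ 2 + 1 := by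
        have h' := hsum
        rw [hN] at h'
        refine Nat.eq_of_mul_eq_mul_right hr ?_
        rw [← h']
        exact Nat.mul_comm _ _
      rw [hcardB, this]
  refine ⟨part1, ?_, ?_⟩
  · intro y hy
    have hy' : y ∈ (nthRootsFinset N (1 : F)).image (fun x => x ^ (q - 1)) := by
      rw [himage, hmemB]; exact hy
    rw [Finset.mem_image] at hy'
    obtain ⟨x, hx, hxy⟩ := hy'
    exact ⟨x, (hmemA x).mp hx, hxy⟩
  · intro y hy
    have hy' : y ∈ (nthRootsFinset N (1 : F)).image (fun x => x ^ (q - 1)) := by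
      rw [himage, hmemB]; exact hy
    rw [Finset.mem_image] at hy'
    obtain ⟨x₀, hx₀, hxy⟩ := hy'
    have hset : {x : F | x ^ N = 1 ∧ x ^ (q - 1) = y} =
        ↑((nthRootsFinset N (1 : F)).filter (fun x => x ^ (q - 1) = y)) := by
      ext x
      simp only [Set.mem_setOf_eq, Finset.coe_filter, hmemA]
    rw [hset, Set.ncard_coe_finset]
    exact key y x₀ hx₀ hxy
end
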